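/- arXiv:1305.3114 — 2 statements merged into one kernel-verified Lean document; each statement's English description precedes it below -/
import Mathlib

section
/- Let t : ℝ → ℝ be a measurable function with 0 < t(x) < 1 for all x, and for |x|, |y| ≥ 2 define K(x,y) = ∫ over the intersection of the intervals [(x−1)/(2t(x)), (x+1)/(2t(x))] and [(y−1)/(2t(y)), (y+1)/(2t(y))] of dξ/|ξ|. Then there is an absolute constant C such that K(x,y) ≤ C min(1/|x|, 1/|y|) for all |x|, |y| ≥ 2. -/
open MeasureTheory

lemma aux_bound (t x : ℝ) (ht0 : 0 < t) (hx : 2 ≤ |x|) (T : Set ℝ)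
    (hT : MeasurableSet T) :
    (∫ ξ in Set.Icc ((x-1)/(2*t)) ((x+1)/(2*t)) ∩ T, 1/|ξ|) ≤ 4 * (1/|x|) := by
  have hc : (0:ℝ) < 2*t := by linarith
  have hx0 : (0:ℝ) < |x| := by linarith
  set a := (x-1)/(2*t)
  set b := (x+1)/(2*t)
  set s := Set.Icc a b ∩ T with hs
  have hsub : s ⊆ Set.Icc a b := Set.inter_subset_left
  have hmeas : MeasurableSet s := measurableSet_Icc.inter hT
  -- lower bound on |ξ| on s
  have hlow : ∀ ξ ∈ s, |x|/(2*(2*t)) ≤ |ξ| := by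
    intro ξ hξ
    obtain ⟨hξ1, hξ2⟩ := hsub hξ
    rcases abs_cases x with ⟨hxe, hxs⟩ | ⟨hxe, hxs⟩
    · -- x ≥ 0, so x ≥ 2, ξ ≥ (x-1)/(2t) > 0
      have h1 : (x - 1)/(2*t) ≥ (x/2)/(2*t) := by
        apply div_le_div_of_nonneg_right _ hc.le
        linarith [hxe ▸ hx]
      have hξpos : 0 < ξ := lt_of_lt_of_le (div_pos (by linarith [hxe ▸ hx]) hc) (le_trans h1 hξ1)
      rw [abs_of_pos hξpos, hxe]
      calc x/(2*(2*t)) = (x/2)/(2*t) := by ring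
        _ ≤ (x-1)/(2*t) := h1
        _ ≤ ξ := hξ1
    · -- x < 0, so x ≤ -2
      have hx2 : x ≤ -2 := by linarith [hxe ▸ hx]
      have h1 : (x + 1)/(2*t) ≤ (x/2)/(2*t) := by
        apply div_le_div_of_nonneg_right _ hc.le
        linarith
      have hξneg : ξ < 0 := lt_of_le_of_lt (le_trans hξ2 h1) (by
        have : x/2 < 0 := by linarith
        exact div_neg_of_neg_of_pos this hc)
      rw [abs_of_neg hξneg, hxe]
      have : ξ ≤ (x/2)/(2*t) := le_trans hξ2 h1
      calc -x/(2*(2*t)) = -((x/2)/(2*t)) := by ring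
        _ ≤ -ξ := by linarith
  have hμIcc : volume (Set.Icc a b) = ENNReal.ofReal (2/(2*t)) := by
    rw [Real.volume_Icc]
    congr 1
    field_simp [a, b]
    simp only [a, b]
    field_simp
    ring
  have hμ : volume s ≤ ENNReal.ofReal (2/(2*t)) := by
    rw [← hμIcc]; exact measure_mono hsub
  have hμfin : volume s < ⊤ := lt_of_le_of_lt hμ ENNReal.ofReal_lt_top
  have hCb : ∀ ξ ∈ s, ‖(1:ℝ)/|ξ|‖ ≤ 2*(2*t)/|x| := by
    intro ξ hξ
    have h1 := hlow ξ hξ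
    have hpos : (0:ℝ) < |x|/(2*(2*t)) := by positivity
    rw [Real.norm_eq_abs, abs_of_nonneg (by positivity)]
    calc 1/|ξ| ≤ 1/(|x|/(2*(2*t))) := one_div_le_one_div_of_le hpos h1
      _ = 2*(2*t)/|x| := by rw [one_div_div]
  have hnorm := norm_setIntegral_le_of_norm_le_const hμfin hCb
  have htoReal : (volume s).toReal ≤ 2/(2*t) := by
    exact ENNReal.toReal_le_of_le_ofReal (by positivity) hμ
  calc (∫ ξ in s, 1/|ξ|) ≤ ‖∫ ξ in s, 1/|ξ|‖ := le_abs_self _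
    _ ≤ 2*(2*t)/|x| * (volume s).toReal := hnorm
    _ ≤ 2*(2*t)/|x| * (2/(2*t)) := by
        apply mul_le_mul_of_nonneg_left htoReal (by positivity)
    _ = 4 * (1/|x|) := by field_simp; ring

theorem stmt_9 : ∃ C : ℝ, 0 < C ∧ ∀ (t : ℝ → ℝ), Measurable t →
    (∀ x, 0 < t x ∧ t x < 1) → ∀ x y : ℝ, 2 ≤ |x| → 2 ≤ |y| →
    (∫ ξ in Set.Icc ((x-1)/(2*t x)) ((x+1)/(2*t x)) ∩
            Set.Icc ((y-1)/(2*t y)) ((y+1)/(2*t y)), 1/|ξ|) ≤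
      C * min (1/|x|) (1/|y|) := by
  refine ⟨4, by norm_num, ?_⟩
  intro t _ ht x y hx hy
  have h1 := aux_bound (t x) x (ht x).1 hx (Set.Icc ((y-1)/(2*t y)) ((y+1)/(2*t y))) measurableSet_Icc
  have h2 := aux_bound (t y) y (ht y).1 hy (Set.Icc ((x-1)/(2*t x)) ((x+1)/(2*t x))) measurableSet_Icc
  rw [Set.inter_comm] at h2
  rcases min_cases (1/|x|) (1/|y|) with ⟨hm, _⟩ | ⟨hm, _⟩ <;> rw [min_def] at * <;> rw [hm]
  · exact h1
  · exact h2
end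

section
/- If there is a constant C such that for every Schwartz function f and every measurable function t : ℝ → (0,1), the operator Sf(x) = ∫ e^{i t(x) ξ²} e^{ixξ} \hat f(ξ) dξ satisfies ‖Sf‖_{L²(ℝ)} ≤ C ‖f‖_{H_s}, then s ≥ 1/2. -/
open MeasureTheory

/-- Fourier transform with the paper's normalization: `f̂(ξ) = ∫ e^{-ixξ} f(x) dx`. -/
noncomputable def fourierHat (f : ℝ → ℂ) (ξ : ℝ) : ℂ :=
  ∫ x : ℝ, Complex.exp (-(Complex.I * x * ξ)) * f x

section Aux
open Complex Polynomial Filter Asymptotics Real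


lemma gauss_iteratedDeriv (b c : ℂ) (n : ℕ) :
    ∃ p : Polynomial ℂ, ∀ x : ℝ,
      iteratedDeriv n (fun x : ℝ => Complex.exp (b*x^2 + c*x)) x
        = p.eval ↑x * Complex.exp (b*(x:ℂ)^2 + c*x) := by
  induction n with
  | zero => exact ⟨1, fun x => by simp⟩
  | succ n ih =>
    obtain ⟨p, hp⟩ := ih
    refine ⟨derivative p + p * (Polynomial.C (2*b) * X + Polynomial.C c), fun x => ?_⟩
    rw [iteratedDeriv_succ]
    have heq : deriv (iteratedDeriv n fun x : ℝ => cexp (b*x^2+c*x)) x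
        = deriv (fun x : ℝ => p.eval ↑x * cexp (b*(x:ℂ)^2+c*x)) x := by
      apply Filter.EventuallyEq.deriv_eq
      exact Filter.Eventually.of_forall hp
    rw [heq]
    have h2 : HasDerivAt (fun z : ℂ => cexp (b*z^2 + c*z)) ((2*b*(x:ℂ)+c) * cexp (b*(x:ℂ)^2+c*x)) ↑x := by
      have hq : HasDerivAt (fun z : ℂ => b*z^2 + c*z) (2*b*(x:ℂ) + c) ↑x := by
        have := ((hasDerivAt_pow 2 ((x:ℝ):ℂ)).const_mul b).add ((hasDerivAt_id ((x:ℝ):ℂ)).const_mul c)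
        refine this.congr_deriv ?_
        norm_num
        ring
      simpa [mul_comm] using hq.cexp
    have hd : HasDerivAt (fun x : ℝ => p.eval ↑x * cexp (b*(x:ℂ)^2+c*x))
        ((derivative p).eval ↑x * cexp (b*(x:ℂ)^2+c*x)
          + p.eval ↑x * ((2*b*(x:ℂ) + c) * cexp (b*(x:ℂ)^2+c*x))) x :=
      ((p.hasDerivAt ((x:ℝ):ℂ)).comp_ofReal).mul (h2.comp_ofReal)
    rw [hd.deriv]
    simp only [eval_add, eval_mul, eval_C, eval_X]
    ring


lemma exists_bound_of_tendsto_cocompact {f : ℝ → ℝ} (hc : Continuous f)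
    (h : Filter.Tendsto f (Filter.cocompact ℝ) (nhds 0)) : ∃ C, ∀ x, f x ≤ C := by
  have h1 : f ⁻¹' Set.Iio 1 ∈ Filter.cocompact ℝ := h (Iio_mem_nhds one_pos)
  rw [Filter.mem_cocompact] at h1
  obtain ⟨K, hK, hsub⟩ := h1
  obtain ⟨C, hC⟩ := hK.exists_bound_of_continuousOn hc.continuousOn
  refine ⟨max C 1, fun x => ?_⟩
  by_cases hx : x ∈ K
  · exact le_trans (le_trans (le_abs_self _) (hC x hx)) (le_max_left _ _)
  · exact le_trans (le_of_lt (hsub hx)) (le_max_right _ _)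

lemma tendsto_pow_mul_cexp {b : ℂ} (c : ℂ) (hb : b.re < 0) (m : ℕ) :
    Filter.Tendsto (fun x : ℝ => |x|^m * ‖Complex.exp (b*x^2+c*x)‖)
      (Filter.cocompact ℝ) (nhds 0) := by
  have h := (cexp_neg_quadratic_isLittleO_abs_rpow_cocompact hb c (-(m:ℝ))).norm_left
  have h2 := (Asymptotics.isBigO_refl (fun x : ℝ => |x|^m) (Filter.cocompact ℝ)).mul_isLittleO h
  have habs : ∀ᶠ x : ℝ in Filter.cocompact ℝ, 1 ≤ |x| := by
    rw [cocompact_eq_atBot_atTop, Filter.eventually_sup]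
    constructor
    · filter_upwards [Filter.eventually_le_atBot (-1 : ℝ)] with x hx
      rw [_root_.abs_of_nonpos (by linarith)]; linarith
    · filter_upwards [Filter.eventually_ge_atTop (1 : ℝ)] with x hx
      rw [_root_.abs_of_nonneg (by linarith)]; linarith
  have hev : (fun x : ℝ => |x|^m * |x| ^ (-(m:ℝ))) =ᶠ[Filter.cocompact ℝ] (fun _ => (1:ℝ)) := by
    filter_upwards [habs] with x hx
    have hx0 : (0:ℝ) < |x| := lt_of_lt_of_le one_pos hx
    rw [← Real.rpow_natCast |x| m, ← Real.rpow_add hx0]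
    simp
  have h3 := h2.trans_eventuallyEq hev
  rw [Asymptotics.isLittleO_one_iff] at h3
  exact h3

noncomputable def gaussMap (b c : ℂ) (hb : b.re < 0) : SchwartzMap ℝ ℂ where
  toFun := fun x : ℝ => Complex.exp (b*x^2 + c*x)
  smooth' := by
    have h1 : ContDiff ℝ ((⊤:ℕ∞):WithTop ℕ∞) fun x : ℝ => (b*(x:ℂ)^2 + c*x) := by
      apply ContDiff.add
      · exact contDiff_const.mul (Complex.ofRealCLM.contDiff.pow 2)
      · exact contDiff_const.mul Complex.ofRealCLM.contDiff
    exact h1.cexp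
  decay' := by
    intro k n
    obtain ⟨p, hp⟩ := gauss_iteratedDeriv b c n
    set d := p.natDegree with hd
    have key : ∀ x : ℝ, ‖x‖^k * ‖iteratedFDeriv ℝ n (fun x : ℝ => Complex.exp (b*x^2 + c*x)) x‖
        ≤ ∑ i ∈ Finset.range (d+1), ‖p.coeff i‖ * (|x|^(k+i) * ‖Complex.exp (b*(x:ℂ)^2+c*x)‖) := by
      intro x
      rw [norm_iteratedFDeriv_eq_norm_iteratedDeriv, hp x]
      rw [Real.norm_eq_abs, norm_mul]
      have hev : ‖p.eval (x:ℂ)‖ ≤ ∑ i ∈ Finset.range (d+1), ‖p.coeff i‖ * |x|^i := by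
        rw [p.eval_eq_sum_range]
        refine le_trans (norm_sum_le _ _) (le_of_eq ?_)
        apply Finset.sum_congr rfl
        intro i _
        rw [norm_mul, norm_pow, Complex.norm_real, Real.norm_eq_abs]
      calc |x|^k * (‖p.eval (x:ℂ)‖ * ‖Complex.exp (b*(x:ℂ)^2+c*x)‖)
          ≤ |x|^k * ((∑ i ∈ Finset.range (d+1), ‖p.coeff i‖ * |x|^i) * ‖Complex.exp (b*(x:ℂ)^2+c*x)‖) := by
            apply mul_le_mul_of_nonneg_left _ (pow_nonneg (abs_nonneg x) k)
            exact mul_le_mul_of_nonneg_right hev (norm_nonneg _)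
        _ = ∑ i ∈ Finset.range (d+1), ‖p.coeff i‖ * (|x|^(k+i) * ‖Complex.exp (b*(x:ℂ)^2+c*x)‖) := by
            rw [Finset.sum_mul, Finset.mul_sum]
            apply Finset.sum_congr rfl
            intro i _
            rw [pow_add]
            ring
    have hcont : Continuous fun x : ℝ => ∑ i ∈ Finset.range (d+1),
        ‖p.coeff i‖ * (|x|^(k+i) * ‖Complex.exp (b*(x:ℂ)^2+c*x)‖) := by
      apply continuous_finset_sum
      intro i _
      apply Continuous.mul continuous_const
      apply Continuous.mul ((_root_.continuous_abs.pow _))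
      exact (Complex.continuous_exp.comp (by continuity)).norm
    have htend : Filter.Tendsto (fun x : ℝ => ∑ i ∈ Finset.range (d+1),
        ‖p.coeff i‖ * (|x|^(k+i) * ‖Complex.exp (b*(x:ℂ)^2+c*x)‖))
        (Filter.cocompact ℝ) (nhds 0) := by
      have : (0:ℝ) = ∑ i ∈ Finset.range (d+1), ‖p.coeff i‖ * 0 := by simp
      rw [this]
      apply tendsto_finset_sum
      intro i _
      exact (tendsto_pow_mul_cexp c hb (k+i)).const_mul _
    obtain ⟨M, hM⟩ := exists_bound_of_tendsto_cocompact hcont htend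
    exact ⟨M, fun x => le_trans (key x) (hM x)⟩


noncomputable def gaussAmp : ℂ := ((Real.pi:ℂ)/(1/2))^(1/2:ℂ)

noncomputable def gaussE (τ x R : ℝ) : ℂ :=
  -(R:ℂ)^2/2 - (Complex.I*↑x + ↑R)^2/(4*(Complex.I*↑τ - 1/2))

lemma gauss_hbre (τ : ℝ) : (Complex.I*(τ:ℂ) - 1/2).re < 0 := by simp

lemma fourierHat_gauss (R ξ : ℝ) :
    (∫ x : ℝ, Complex.exp (-(Complex.I * x * ξ)) * Complex.exp (-(1/2:ℂ)*x^2 + (Complex.I*R)*x))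
      = gaussAmp * Complex.exp (((-(ξ-R)^2/2 : ℝ)):ℂ) := by
  have hrw : ∀ x : ℝ, cexp (-(I * ↑x * ↑ξ)) * cexp (-(1/2:ℂ)*x^2 + (I*↑R)*x)
      = cexp ((-(1/2:ℂ))*x^2 + (I*((R-ξ:ℝ):ℂ))*x + 0) := by
    intro x; rw [← Complex.exp_add]; push_cast; ring_nf
  simp_rw [hrw]
  rw [integral_cexp_quadratic (by norm_num : (-(1/2:ℂ)).re < 0)]
  congr 1
  · unfold gaussAmp; norm_num
  · congr 1
    have hI : (Complex.I*((R-ξ:ℝ):ℂ))^2 = -(((R-ξ:ℝ):ℂ))^2 := by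
      rw [mul_pow, Complex.I_sq]; ring
    rw [hI]; push_cast; ring

lemma inner_int (τ x R : ℝ) :
    (∫ ξ : ℝ, Complex.exp (Complex.I*((τ*ξ^2 + x*ξ : ℝ):ℂ)) *
        (gaussAmp * Complex.exp (((-(ξ-R)^2/2 : ℝ)):ℂ)))
      = gaussAmp * (((Real.pi:ℂ) / -(Complex.I*↑τ - 1/2))^(1/2:ℂ) *
          Complex.exp (gaussE τ x R)) := by
  have hrw : ∀ ξ : ℝ, cexp (I*((τ*ξ^2 + x*ξ : ℝ):ℂ)) * (gaussAmp * cexp (((-(ξ-R)^2/2 : ℝ)):ℂ))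
      = gaussAmp * cexp ((I*↑τ - 1/2)*ξ^2 + (I*↑x + ↑R)*ξ + (-(R:ℂ)^2/2)) := by
    intro ξ
    rw [mul_comm (cexp _), mul_assoc, ← Complex.exp_add]
    congr 2
    push_cast; ring
  simp_rw [hrw]
  rw [MeasureTheory.integral_const_mul]
  rw [integral_cexp_quadratic (gauss_hbre τ)]
  rfl

lemma norm_sq_closed (τ x R : ℝ) :
    ‖gaussAmp * (((Real.pi:ℂ) / -(Complex.I*↑τ - 1/2))^(1/2:ℂ) *
        Complex.exp (gaussE τ x R))‖^2
      = 2*Real.pi*((Real.pi / ‖Complex.I*↑τ - 1/2‖) *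
          Real.exp (2*(gaussE τ x R).re)) := by
  have hb0 : (Complex.I*(τ:ℂ) - 1/2) ≠ 0 := by
    intro hc
    have := congrArg Complex.re hc
    simp at this
  have h2pi : (0:ℝ) < 2*Real.pi := by positivity
  have hAmp : ‖gaussAmp‖ = (2*Real.pi) ^ (1/2:ℝ) := by
    unfold gaussAmp
    rw [show ((Real.pi:ℂ)/(1/2)) = (((2*Real.pi:ℝ)):ℂ) by push_cast; ring]
    rw [Complex.norm_cpow_eq_rpow_re_of_pos h2pi]
    norm_num
  have hcpow : ‖((Real.pi:ℂ) / -(Complex.I*↑τ - 1/2))^(1/2:ℂ)‖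
      = (Real.pi / ‖Complex.I*↑τ - 1/2‖) ^ (1/2:ℝ) := by
    rw [show (1/2:ℂ) = ((1/2:ℝ):ℂ) by norm_num,
      Complex.norm_cpow_real, norm_div, norm_neg, Complex.norm_real, Real.norm_eq_abs,
      _root_.abs_of_pos Real.pi_pos]
  rw [norm_mul, norm_mul, hAmp, hcpow, Complex.norm_exp]
  rw [mul_pow, mul_pow]
  have hsq : ∀ a : ℝ, 0 ≤ a → (a ^ (1/2:ℝ))^2 = a := by
    intro a ha
    rw [← Real.rpow_natCast (a ^ (1/2:ℝ)) 2, ← Real.rpow_mul ha]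
    norm_num
  rw [hsq _ h2pi.le, hsq _ (by positivity)]
  congr 1
  rw [sq, ← Real.exp_add]
  ring_nf

lemma gaussE_re (τ x R : ℝ) :
    (gaussE τ x R).re = -R^2/2 - (-2*(R^2 - x^2) + 8*R*x*τ)/(16*τ^2 + 4) := by
  unfold gaussE
  have hns : (16*τ^2 + 4) ≠ 0 := by positivity
  simp [Complex.div_re, Complex.normSq_apply, pow_two]
  ring

lemma gaussE_re_crit (x R : ℝ) (hR : R ≠ 0) : (gaussE (-x/(2*R)) x R).re = 0 := by
  rw [gaussE_re]
  have h1 : 16*(-x/(2*R))^2 + 4 = (4*x^2 + 4*R^2)/R^2 := by field_simp; ring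
  rw [h1]
  field_simp
  ring

lemma gaussE_re_half (x R : ℝ) : (gaussE (1/2) x R).re = -(x+R)^2/4 := by
  rw [gaussE_re]
  norm_num
  ring

lemma abs_b_ge (τ : ℝ) : 1/2 ≤ ‖Complex.I*↑τ - 1/2‖ := by
  have h := Complex.abs_re_le_norm (Complex.I*↑τ - 1/2)
  rw [show ((Complex.I*↑τ - 1/2).re) = -(1/2) by simp] at h
  rw [_root_.abs_neg, _root_.abs_of_pos (by norm_num : (0:ℝ) < 1/2)] at h
  exact h

lemma abs_b_le {τ : ℝ} (h0 : 0 ≤ τ) (h1 : τ ≤ 1) : ‖Complex.I*↑τ - 1/2‖ ≤ 2 := by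
  have h := Complex.sq_norm (Complex.I*↑τ - 1/2)
  have hns : Complex.normSq (Complex.I*↑τ - 1/2) = τ^2 + 1/4 := by
    simp [Complex.normSq_apply]; ring
  nlinarith [norm_nonneg (Complex.I*↑τ - 1/2)]

lemma gaussMap_apply (b c : ℂ) (hb : b.re < 0) (x : ℝ) :
    gaussMap b c hb x = Complex.exp (b*x^2 + c*x) := rfl

lemma norm_sq_amp (r : ℝ) : ‖gaussAmp * Complex.exp ((r:ℝ):ℂ)‖^2 = 2*Real.pi*Real.exp (2*r) := by
  have h2pi : (0:ℝ) < 2*Real.pi := by positivity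
  have hAmp : ‖gaussAmp‖ = (2*Real.pi) ^ (1/2:ℝ) := by
    unfold gaussAmp
    rw [show ((Real.pi:ℂ)/(1/2)) = (((2*Real.pi:ℝ)):ℂ) by push_cast; ring]
    rw [Complex.norm_cpow_eq_rpow_re_of_pos h2pi]
    norm_num
  rw [norm_mul, hAmp, Complex.norm_exp, mul_pow]
  have hsq : ((2*Real.pi) ^ (1/2:ℝ))^2 = 2*Real.pi := by
    rw [← Real.rpow_natCast ((2*Real.pi) ^ (1/2:ℝ)) 2, ← Real.rpow_mul h2pi.le]
    norm_num
  rw [hsq]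
  congr 1
  rw [Complex.ofReal_re, sq, ← Real.exp_add]
  ring_nf

lemma integrable_gauss_shift (a : ℝ) :
    Integrable fun x : ℝ => Real.exp (-(1/2)*(x+a)^2) := by
  have h := integrable_exp_neg_mul_sq (by norm_num : (0:ℝ) < 1/2)
  have h2 := h.comp_add_right a
  simpa using h2

lemma integral_gauss_shift_le (a : ℝ) : (∫ x : ℝ, Real.exp (-(1/2)*(x+a)^2)) ≤ 3 := by
  have h1 : (∫ x : ℝ, Real.exp (-(1/2)*(x+a)^2)) = ∫ x : ℝ, Real.exp (-(1/2)*x^2) := by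
    exact MeasureTheory.integral_add_right_eq_self (fun x => Real.exp (-(1/2)*x^2)) a
  rw [h1, integral_gaussian]
  have h9 : Real.pi / (1/2) ≤ 9 := by nlinarith [Real.pi_le_four]
  calc Real.sqrt (Real.pi/(1/2)) ≤ Real.sqrt 9 := Real.sqrt_le_sqrt h9
    _ = 3 := by
        rw [show (9:ℝ) = 3^2 by norm_num, Real.sqrt_sq (by norm_num : (0:ℝ) ≤ 3)]

lemma rpow_poly_bound {s σ : ℝ} (hsσ : s ≤ σ) (h0 : 0 ≤ σ) (h1 : σ ≤ 1) (R ξ : ℝ) :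
    (1+ξ^2)^s ≤ 2*(1+R^2)^σ*(1+(ξ-R)^2) := by
  have hb1 : (1:ℝ) ≤ 1+ξ^2 := by nlinarith [sq_nonneg ξ]
  have step1 : (1+ξ^2)^s ≤ (1+ξ^2)^σ := Real.rpow_le_rpow_of_exponent_le hb1 hsσ
  have hle : (1+ξ^2) ≤ 2*(1+R^2)*(1+(ξ-R)^2) := by
    nlinarith [sq_nonneg (ξ-2*R), sq_nonneg (ξ-R), sq_nonneg R,
      mul_nonneg (sq_nonneg R) (sq_nonneg (ξ-R))]
  have step2 : (1+ξ^2)^σ ≤ (2*(1+R^2)*(1+(ξ-R)^2))^σ :=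
    Real.rpow_le_rpow (by positivity) hle h0
  have heq : (2*(1+R^2)*(1+(ξ-R)^2))^σ = 2^σ * (1+R^2)^σ * ((1+(ξ-R)^2))^σ := by
    rw [Real.mul_rpow (by positivity) (by positivity),
        Real.mul_rpow (by positivity) (by positivity)]
  have h2 : (2:ℝ)^σ ≤ 2 := by
    calc (2:ℝ)^σ ≤ 2^(1:ℝ) := Real.rpow_le_rpow_of_exponent_le one_le_two h1
      _ = 2 := Real.rpow_one 2
  have h3 : ((1+(ξ-R)^2))^σ ≤ 1+(ξ-R)^2 := by
    calc ((1+(ξ-R)^2))^σ ≤ (1+(ξ-R)^2)^(1:ℝ) :=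
          Real.rpow_le_rpow_of_exponent_le (by nlinarith [sq_nonneg (ξ-R)]) h1
      _ = 1+(ξ-R)^2 := Real.rpow_one _
  have hfin : 2^σ * (1+R^2)^σ * ((1+(ξ-R)^2))^σ ≤ 2*(1+R^2)^σ*(1+(ξ-R)^2) := by
    have hA : (0:ℝ) ≤ (1+R^2)^σ := by positivity
    have hB : (0:ℝ) ≤ ((1+(ξ-R)^2))^σ := by positivity
    exact mul_le_mul (mul_le_mul_of_nonneg_right h2 hA) h3 hB (by positivity)
  calc (1+ξ^2)^s ≤ (1+ξ^2)^σ := step1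
    _ ≤ (2*(1+R^2)*(1+(ξ-R)^2))^σ := step2
    _ = 2^σ * (1+R^2)^σ * ((1+(ξ-R)^2))^σ := heq
    _ ≤ 2*(1+R^2)^σ*(1+(ξ-R)^2) := hfin

lemma poly_exp_bound (v : ℝ) : (1+v^2) * Real.exp (-v^2) ≤ 2*Real.exp (-(1/2)*v^2) := by
  have h1 : (1+v^2) ≤ 2*Real.exp ((1/2)*v^2) := by
    have := Real.add_one_le_exp ((1/2)*v^2)
    nlinarith [sq_nonneg v]
  calc (1+v^2) * Real.exp (-v^2) ≤ (2*Real.exp ((1/2)*v^2)) * Real.exp (-v^2) :=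
        mul_le_mul_of_nonneg_right h1 (Real.exp_nonneg _)
    _ = 2*Real.exp (-(1/2)*v^2) := by
        rw [mul_assoc, ← Real.exp_add]; ring_nf

end Aux

set_option maxHeartbeats 2000000 in
theorem stmt_16 (s C : ℝ)
    (h : ∀ (t : ℝ → ℝ), Measurable t → (∀ x, 0 < t x ∧ t x < 1) →
      ∀ f : SchwartzMap ℝ ℂ,
      (∫ x : ℝ, ‖∫ ξ : ℝ, Complex.exp (Complex.I * ((t x * ξ^2 + x * ξ) : ℝ)) *
          fourierHat f ξ‖^2) ≤
        C^2 * ∫ ξ : ℝ, (1 + ξ^2) ^ s * ‖fourierHat f ξ‖^2) :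
    1/2 ≤ s := by
  by_contra hs
  push_neg at hs
  set σ := max s 0 with hσdef
  have hσ0 : 0 ≤ σ := le_max_right _ _
  have hσs : s ≤ σ := le_max_left _ _
  have hσlt : σ < 1/2 := max_lt hs (by norm_num)
  have hσ1 : σ ≤ 1 := by linarith
  have hπ : (0:ℝ) < Real.pi := Real.pi_pos
  have hC2 : (0:ℝ) ≤ C^2 := sq_nonneg C
  obtain ⟨R, hR1, hRbig⟩ : ∃ R : ℝ, 1 ≤ R ∧ 96*Real.pi*C^2 + 1 ≤ R ^ (1-2*σ) := by
    have hpow : Filter.Tendsto (fun R : ℝ => R ^ (1-2*σ)) Filter.atTop Filter.atTop :=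
      tendsto_rpow_atTop (by linarith)
    have h1 := hpow.eventually_ge_atTop (96*Real.pi*C^2 + 1)
    obtain ⟨R, hR⟩ := (h1.and (Filter.eventually_ge_atTop (1:ℝ))).exists
    exact ⟨R, hR.2, hR.1⟩
  have hR0 : (0:ℝ) < R := lt_of_lt_of_le one_pos hR1
  set t : ℝ → ℝ := (Set.Ioo (-(2*R)) 0).piecewise (fun x => -x/(2*R)) (fun _ => 1/2) with ht
  have htmeas : Measurable t :=
    Measurable.piecewise measurableSet_Ioo (measurable_neg.div_const (2*R)) measurable_const
  have htin : ∀ x ∈ Set.Ioo (-(2*R)) 0, t x = -x/(2*R) := fun x hx =>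
    Set.piecewise_eq_of_mem _ _ _ hx
  have htout : ∀ (x : ℝ), x ∉ Set.Ioo (-(2*R)) 0 → t x = 1/2 := fun x hx =>
    Set.piecewise_eq_of_notMem _ _ _ hx
  have htrange : ∀ x, 0 < t x ∧ t x < 1 := by
    intro x
    by_cases hx : x ∈ Set.Ioo (-(2*R)) 0
    · rw [htin x hx]
      obtain ⟨hx1, hx2⟩ := hx
      constructor
      · apply div_pos (by linarith) (by linarith)
      · rw [div_lt_one (by linarith)]; linarith
    · rw [htout x hx]; norm_num
  set f : SchwartzMap ℝ ℂ := gaussMap (-(1/2)) (Complex.I*R) (by norm_num) with hfdef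
  have hf : ∀ ξ, fourierHat (⇑f) ξ = gaussAmp * Complex.exp (((-(ξ-R)^2/2 : ℝ)):ℂ) := by
    intro ξ
    unfold fourierHat
    simp only [hfdef, gaussMap_apply]
    exact fourierHat_gauss R ξ
  have key := h t htmeas htrange f
  -- closed form for the inner integral norms
  have hg : ∀ x : ℝ, ‖∫ ξ : ℝ, Complex.exp (Complex.I * ((t x * ξ^2 + x * ξ : ℝ):ℂ)) *
        fourierHat (⇑f) ξ‖^2
      = 2*Real.pi*((Real.pi / ‖Complex.I*↑(t x) - 1/2‖) *
          Real.exp (2*(gaussE (t x) x R).re)) := by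
    intro x
    simp only [hf]
    rw [inner_int (t x) x R, norm_sq_closed]
  simp_rw [hg] at key
  set g : ℝ → ℝ := fun x => 2*Real.pi*((Real.pi / ‖Complex.I*↑(t x) - 1/2‖) *
      Real.exp (2*(gaussE (t x) x R).re)) with hgdef
  have hgnonneg : ∀ x, 0 ≤ g x := by
    intro x
    have := norm_nonneg (Complex.I*↑(t x) - 1/2)
    positivity
  -- bounds for g
  have hglb : ∀ x ∈ Set.Ioo (-(2*R)) 0, Real.pi^2 ≤ g x := by
    intro x hx
    have htx := htin x hx
    have hrange := htrange x
    have habsle : ‖Complex.I*↑(t x) - 1/2‖ ≤ 2 :=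
      abs_b_le hrange.1.le hrange.2.le
    have habsge := abs_b_ge (t x)
    have hre : (gaussE (t x) x R).re = 0 := by
      rw [htx]; exact gaussE_re_crit x R (ne_of_gt hR0)
    rw [hgdef]
    simp only [hre, mul_zero, Real.exp_zero, mul_one]
    calc Real.pi^2 = 2*Real.pi*(Real.pi/2) := by ring
      _ ≤ 2*Real.pi*(Real.pi / ‖Complex.I*↑(t x) - 1/2‖) := by
          gcongr
  have hgub : ∀ x : ℝ, g x ≤ (Set.Ioo (-(2*R)) 0).indicator (fun _ => 4*Real.pi^2) x
      + 4*Real.pi^2*Real.exp (-(1/2)*(x+R)^2) := by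
    intro x
    have habsge := abs_b_ge (t x)
    have hdivle : Real.pi / ‖Complex.I*↑(t x) - 1/2‖ ≤ 2*Real.pi := by
      rw [div_le_iff₀ (by linarith)]
      nlinarith
    by_cases hx : x ∈ Set.Ioo (-(2*R)) 0
    · have hre : (gaussE (t x) x R).re = 0 := by
        rw [htin x hx]; exact gaussE_re_crit x R (ne_of_gt hR0)
      rw [hgdef]
      simp only [hre, mul_zero, Real.exp_zero, mul_one, Set.indicator_of_mem hx]
      have hexp : (0:ℝ) ≤ 4*Real.pi^2*Real.exp (-(1/2)*(x+R)^2) := by positivity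
      nlinarith [mul_le_mul_of_nonneg_left hdivle (by positivity : (0:ℝ) ≤ 2*Real.pi)]
    · have hre : (gaussE (t x) x R).re = -(x+R)^2/4 := by
        rw [htout x hx]; exact gaussE_re_half x R
      rw [hgdef]
      simp only [hre, Set.indicator_of_notMem hx, zero_add]
      have hexpeq : Real.exp (2*(-(x+R)^2/4)) = Real.exp (-(1/2)*(x+R)^2) := by
        congr 1; ring
      rw [hexpeq]
      have hexp : (0:ℝ) ≤ Real.exp (-(1/2)*(x+R)^2) := Real.exp_nonneg _
      nlinarith [mul_le_mul_of_nonneg_right hdivle hexp, hπ]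
  -- measurability and integrability of g
  have hb1meas : Measurable fun x : ℝ => (Complex.I*↑(t x) - 1/2) := by
    have := (Complex.measurable_ofReal.comp htmeas)
    exact (this.const_mul Complex.I).sub_const _
  have hgmeas : Measurable g := by
    apply Measurable.mul measurable_const
    apply Measurable.mul
    · exact (continuous_norm.measurable.comp hb1meas).const_div Real.pi
    · apply Real.measurable_exp.comp
      apply Measurable.const_mul
      apply Complex.measurable_re.comp
      unfold gaussE
      apply Measurable.sub measurable_const
      apply Measurable.div
      · exact (((Complex.measurable_ofReal.const_mul Complex.I).add_const _).pow_const 2)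
      · exact hb1meas.const_mul 4
  have hφint : Integrable (fun x : ℝ => (Set.Ioo (-(2*R)) 0).indicator (fun _ => 4*Real.pi^2) x
      + 4*Real.pi^2*Real.exp (-(1/2)*(x+R)^2)) := by
    apply Integrable.add
    · rw [integrable_indicator_iff measurableSet_Ioo]
      apply (integrableOn_const_iff (C := (4*Real.pi^2 : ℝ))).mpr
      exact Or.inr measure_Ioo_lt_top
    · exact (integrable_gauss_shift R).const_mul _
  have hgint : Integrable g := by
    apply Integrable.mono' hφint hgmeas.aestronglyMeasurable
    apply Filter.Eventually.of_forall
    intro x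
    rw [Real.norm_eq_abs, abs_of_nonneg (hgnonneg x)]
    exact hgub x
  -- lower bound for the LHS
  have hvol : (volume (Set.Ioo (-(2*R)) 0)).toReal = 2*R := by
    rw [Real.volume_Ioo]
    rw [ENNReal.toReal_ofReal (by linarith)]
    ring
  have hLHS : Real.pi^2 * (2*R) ≤ ∫ x : ℝ, g x := by
    have h1 : Real.pi^2 * (2*R) = ∫ _ in Set.Ioo (-(2*R)) 0, (Real.pi^2 : ℝ) := by
      rw [setIntegral_const, measureReal_def, hvol, smul_eq_mul]; ring
    rw [h1]
    calc (∫ _ in Set.Ioo (-(2*R)) 0, (Real.pi^2 : ℝ))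
        ≤ ∫ x in Set.Ioo (-(2*R)) 0, g x := by
          apply setIntegral_mono_on ((integrableOn_const_iff (C := (Real.pi^2 : ℝ))).mpr (Or.inr measure_Ioo_lt_top))
            hgint.integrableOn measurableSet_Ioo hglb
      _ ≤ ∫ x : ℝ, g x := setIntegral_le_integral hgint
          (Filter.Eventually.of_forall hgnonneg)
  -- upper bound for the RHS
  have hfn : ∀ ξ : ℝ, ‖fourierHat (⇑f) ξ‖^2 = 2*Real.pi*Real.exp (-(ξ-R)^2) := by
    intro ξ
    rw [hf ξ, norm_sq_amp]
    congr 1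
    ring
  have hptw : ∀ ξ : ℝ, (1+ξ^2)^s * ‖fourierHat (⇑f) ξ‖^2
      ≤ (8*Real.pi*(1+R^2)^σ) * Real.exp (-(1/2)*(ξ+(-R))^2) := by
    intro ξ
    rw [hfn ξ]
    have h1 := rpow_poly_bound hσs hσ0 hσ1 R ξ
    have h2 := poly_exp_bound (ξ-R)
    have hexp : (0:ℝ) ≤ Real.exp (-(ξ-R)^2) := Real.exp_nonneg _
    have hσp : (0:ℝ) ≤ (1+R^2)^σ := by positivity
    have hnn : (0:ℝ) ≤ (1+ξ^2)^s := by positivity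
    calc (1+ξ^2)^s * (2*Real.pi*Real.exp (-(ξ-R)^2))
        ≤ (2*(1+R^2)^σ*(1+(ξ-R)^2)) * (2*Real.pi*Real.exp (-(ξ-R)^2)) := by
          apply mul_le_mul_of_nonneg_right h1 (by positivity)
      _ = (4*Real.pi*(1+R^2)^σ) * ((1+(ξ-R)^2) * Real.exp (-(ξ-R)^2)) := by ring
      _ ≤ (4*Real.pi*(1+R^2)^σ) * (2*Real.exp (-(1/2)*(ξ-R)^2)) := by
          apply mul_le_mul_of_nonneg_left h2 (by positivity)
      _ = (8*Real.pi*(1+R^2)^σ) * Real.exp (-(1/2)*(ξ+(-R))^2) := by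
          rw [show ξ+(-R) = ξ-R by ring]; ring
  have hRHS : (∫ ξ : ℝ, (1+ξ^2)^s * ‖fourierHat (⇑f) ξ‖^2) ≤ 24*Real.pi*(1+R^2)^σ := by
    calc (∫ ξ : ℝ, (1+ξ^2)^s * ‖fourierHat (⇑f) ξ‖^2)
        ≤ ∫ ξ : ℝ, (8*Real.pi*(1+R^2)^σ) * Real.exp (-(1/2)*(ξ+(-R))^2) := by
          apply integral_mono_of_nonneg
          · apply Filter.Eventually.of_forall
            intro ξ
            dsimp only
            positivity
          · exact (integrable_gauss_shift (-R)).const_mul _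
          · exact Filter.Eventually.of_forall hptw
      _ = (8*Real.pi*(1+R^2)^σ) * ∫ ξ : ℝ, Real.exp (-(1/2)*(ξ+(-R))^2) :=
          MeasureTheory.integral_const_mul _ _
      _ ≤ (8*Real.pi*(1+R^2)^σ) * 3 := by
          apply mul_le_mul_of_nonneg_left (integral_gauss_shift_le (-R)) (by positivity)
      _ = 24*Real.pi*(1+R^2)^σ := by ring
  -- combine
  have hcomb : Real.pi^2 * (2*R) ≤ C^2 * (24*Real.pi*(1+R^2)^σ) := by
    calc Real.pi^2 * (2*R) ≤ ∫ x : ℝ, g x := hLHS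
      _ ≤ C^2 * ∫ ξ : ℝ, (1+ξ^2)^s * ‖fourierHat (⇑f) ξ‖^2 := key
      _ ≤ C^2 * (24*Real.pi*(1+R^2)^σ) := mul_le_mul_of_nonneg_left hRHS hC2
  -- (1+R^2)^σ ≤ 2*R^(2σ)
  have hRpow : (1+R^2)^σ ≤ 2*R^(2*σ) := by
    have h1 : (1+R^2) ≤ 2*R^2 := by nlinarith
    have h2 : (1+R^2)^σ ≤ (2*R^2)^σ := Real.rpow_le_rpow (by positivity) h1 hσ0
    have h3 : (2*R^2:ℝ)^σ = 2^σ * (R^2)^σ := Real.mul_rpow (by norm_num) (by positivity)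
    have h4 : ((R^2:ℝ))^σ = R^(2*σ) := by
      rw [← Real.rpow_natCast R 2, ← Real.rpow_mul hR0.le]
      norm_num
    have h5 : (2:ℝ)^σ ≤ 2 := by
      calc (2:ℝ)^σ ≤ 2^(1:ℝ) := Real.rpow_le_rpow_of_exponent_le one_le_two hσ1
        _ = 2 := Real.rpow_one 2
    have h6 : (0:ℝ) ≤ R^(2*σ) := Real.rpow_nonneg hR0.le _
    calc (1+R^2)^σ ≤ 2^σ * R^(2*σ) := by rw [← h4, ← h3]; exact h2
      _ ≤ 2*R^(2*σ) := mul_le_mul_of_nonneg_right h5 h6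
  have hπ1 : (1:ℝ) ≤ Real.pi := by nlinarith [Real.pi_gt_three]
  have hRpos : (0:ℝ) < R^(2*σ) := Real.rpow_pos_of_pos hR0 _
  have hfinal : R ≤ 48*Real.pi*C^2*R^(2*σ) := by
    have hpi2 : (1:ℝ) ≤ Real.pi^2 := by nlinarith [hπ1]
    have e1 : Real.pi^2*(2*R) ≥ 2*R := by nlinarith [hpi2, hR0]
    have e2 : C^2 * (24*Real.pi*(1+R^2)^σ) ≤ C^2*(24*Real.pi*(2*R^(2*σ))) := by
      apply mul_le_mul_of_nonneg_left _ hC2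
      apply mul_le_mul_of_nonneg_left hRpow (by positivity)
    nlinarith
  have hdiv : R^(1-2*σ) ≤ 48*Real.pi*C^2 := by
    have h1 : R^(1-2*σ) = R / R^(2*σ) := by
      rw [Real.rpow_sub hR0, Real.rpow_one]
    rw [h1, div_le_iff₀ hRpos]
    exact hfinal
  nlinarith [hdiv, hRbig]
end
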